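/- Let σ > 0, d ≥ 6, 2 ≤ s ≤ d/2, and set a* = σ(√(2·log(d-s)) + √(2·log s)) and t = σ·√(2·log d). Then (a* - t)/σ ≥ √(2·log s) - (log 2)/√(log(d/2)) > 0, and ((a* - t)/σ)²/2 ≥ log s - √2·log 2. -/

import Mathlib

set_option maxHeartbeats 1000000 in
theorem universal_threshold_below_phase_transition (d s : ℕ) (hd : 6 ≤ d)
    (hs : 2 ≤ s) (hsd : (s : ℝ) ≤ (d : ℝ) / 2)
    (σ astar t : ℝ) (hσ : 0 < σ)
    (hastar : astar = σ * (Real.sqrt (2 * Real.log ((d : ℝ) - s))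
      + Real.sqrt (2 * Real.log s)))
    (ht : t = σ * Real.sqrt (2 * Real.log d)) :
    Real.sqrt (2 * Real.log s) - Real.log 2 / Real.sqrt (Real.log ((d : ℝ) / 2))
        ≤ (astar - t) / σ
    ∧ 0 < Real.sqrt (2 * Real.log s) - Real.log 2 / Real.sqrt (Real.log ((d : ℝ) / 2))
    ∧ Real.log s - Real.sqrt 2 * Real.log 2 ≤ ((astar - t) / σ) ^ 2 / 2 := by
  have hd6 : (6:ℝ) ≤ (d:ℝ) := by exact_mod_cast hd
  have hs2 : (2:ℝ) ≤ (s:ℝ) := by exact_mod_cast hs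
  have hd2 : (3:ℝ) ≤ (d:ℝ)/2 := by linarith
  have hds : (d:ℝ)/2 ≤ (d:ℝ) - s := by linarith
  set L2 := Real.log ((d:ℝ)/2) with hL2def
  set Ls := Real.log (s:ℝ) with hLsdef
  set Lds := Real.log ((d:ℝ) - s) with hLdsdef
  -- basic log facts
  have hlog2pos : (0:ℝ) < Real.log 2 := Real.log_pos (by norm_num)
  have hlog2lt : Real.log 2 < 1 := by
    have := Real.log_two_lt_d9; linarith
  have hL2gt1 : 1 < L2 := by
    have he : Real.exp 1 < 3 := by
      have := Real.exp_one_lt_d9; linarith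
    have : Real.log (Real.exp 1) < Real.log ((d:ℝ)/2) :=
      Real.log_lt_log (Real.exp_pos 1) (lt_of_lt_of_le he hd2)
    rwa [Real.log_exp] at this
  have hLspos : Real.log 2 ≤ Ls := Real.log_le_log (by norm_num) hs2
  have hLs0 : 0 ≤ Ls := le_trans (le_of_lt hlog2pos) hLspos
  have hLsL2 : Ls ≤ L2 := Real.log_le_log (by linarith) hsd
  have hL2Lds : L2 ≤ Lds := Real.log_le_log (by linarith) hds
  have hLd : Real.log (d:ℝ) = L2 + Real.log 2 := by
    rw [hL2def, Real.log_div (by positivity) (by norm_num)]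
    ring
  -- sqrt abbreviations
  set A := Real.sqrt (2 * Lds) with hA
  set B := Real.sqrt (2 * Ls) with hB
  set C := Real.sqrt (2 * Real.log (d:ℝ)) with hC
  set D := Real.sqrt L2 with hD
  have hDpos : 0 < D := Real.sqrt_pos.mpr (by linarith)
  have hDsq : D ^ 2 = L2 := Real.sq_sqrt (by linarith)
  have hDgt1 : 1 < D := by nlinarith [Real.sqrt_nonneg L2]
  have hBsq : B ^ 2 = 2 * Ls := Real.sq_sqrt (by linarith)
  have hBnn : 0 ≤ B := Real.sqrt_nonneg _
  have hs2sq : Real.sqrt 2 ^ 2 = 2 := Real.sq_sqrt (by norm_num)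
  have hs2nn : 0 ≤ Real.sqrt 2 := Real.sqrt_nonneg 2
  have hs2ge1 : 1 ≤ Real.sqrt 2 := by nlinarith
  have h2L2 : Real.sqrt (2 * L2) = Real.sqrt 2 * D := by
    rw [hD, Real.sqrt_mul (by norm_num)]
  -- h1 : C ≤ sqrt(2*L2) + log2/D
  have h1 : C ≤ Real.sqrt 2 * D + Real.log 2 / D := by
    rw [hC, hLd]
    set E := Real.log 2 / D with hEdef
    have hEnn : 0 ≤ E := by positivity
    have hE : E * D = Real.log 2 := by
      rw [hEdef]; field_simp
    have hy : 0 ≤ Real.sqrt 2 * D + E := by positivity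
    have hl2 : Real.log 2 ≤ Real.sqrt 2 * Real.log 2 := by
      have := mul_le_mul_of_nonneg_right hs2ge1 hlog2pos.le
      linarith
    have hDE : Real.sqrt 2 * (E * D) = Real.sqrt 2 * Real.log 2 := by rw [hE]
    have hexp : (Real.sqrt 2 * D + E) ^ 2
        = Real.sqrt 2 ^ 2 * D ^ 2 + 2 * (Real.sqrt 2 * (E * D)) + E ^ 2 := by ring
    rw [hs2sq, hDsq, hDE] at hexp
    have hsq : 2 * (L2 + Real.log 2) ≤ (Real.sqrt 2 * D + E) ^ 2 := by
      rw [hexp]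
      nlinarith [sq_nonneg E]
    calc Real.sqrt (2 * (L2 + Real.log 2))
        ≤ Real.sqrt ((Real.sqrt 2 * D + E) ^ 2) := Real.sqrt_le_sqrt hsq
      _ = Real.sqrt 2 * D + E := Real.sqrt_sq hy
  -- h2 : sqrt(2*L2) ≤ A
  have h2 : Real.sqrt 2 * D ≤ A := by
    rw [← h2L2, hA]
    exact Real.sqrt_le_sqrt (by linarith)
  -- x value
  have hx : (astar - t) / σ = A + B - C := by
    rw [hastar, ht]
    field_simp
  have part1 : B - Real.log 2 / D ≤ (astar - t) / σ := by
    rw [hx]; linarith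
  -- part 2
  have hBge : Real.sqrt (2 * Real.log 2) ≤ B :=
    Real.sqrt_le_sqrt (by linarith)
  have hBgt : Real.log 2 < B := by
    have h22 : Real.sqrt (2 * Real.log 2) ^ 2 = 2 * Real.log 2 :=
      Real.sq_sqrt (by linarith)
    nlinarith [Real.sqrt_nonneg (2 * Real.log 2)]
  have part2 : 0 < B - Real.log 2 / D := by
    have : Real.log 2 / D < Real.log 2 := by
      rw [div_lt_iff₀ hDpos]
      nlinarith
    linarith
  refine ⟨part1, part2, ?_⟩
  -- part 3
  have hBle : B ≤ Real.sqrt 2 * D := by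
    rw [← h2L2, hB]; exact Real.sqrt_le_sqrt (by linarith)
  have hkey : B * (Real.log 2 / D) ≤ Real.sqrt 2 * Real.log 2 := by
    have h := mul_le_mul_of_nonneg_right hBle hlog2pos.le
    calc B * (Real.log 2 / D) = B * Real.log 2 / D := by ring
      _ ≤ Real.sqrt 2 * D * Real.log 2 / D := by
          apply div_le_div_of_nonneg_right h hDpos.le |>.trans_eq rfl
      _ = Real.sqrt 2 * Real.log 2 := by field_simp
  have hy2 : Ls - Real.sqrt 2 * Real.log 2 ≤ (B - Real.log 2 / D) ^ 2 / 2 := by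
    nlinarith [sq_nonneg (Real.log 2 / D)]
  have hxy : (B - Real.log 2 / D) ^ 2 ≤ ((astar - t) / σ) ^ 2 := by
    have := part1
    nlinarith [part2]
  linarith
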